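/- Let S be a strongly ℤ^k-graded unital ring with grading 𝒜 : (Fin k → ℤ) → AddSubgroup S (for all v, w, every element of 𝒜 (v+w) is a finite sum of products of elements of 𝒜 v and 𝒜 w), and let R = S_+ be its positive subring. Let f_1, ..., f_ℓ ∈ S and suppose there exists a non-zero g ∈ S such that f_j * r * g = 0 for all j and all r ∈ R. Then there exists a non-zero h ∈ 𝒜 0 such that f_j * r * h = 0 for all j and all r ∈ R. -/

import Mathlib

/-- `s` belongs to the positive subring `S₊` of the `ℤ^k`-graded ring `S`: all of its
non-zero homogeneous components have degree in `ℕ^k` (all coordinates non-negative). -/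
def MemPositiveSubring {k : ℕ} {S : Type*} [Ring S]
    (𝒜 : (Fin k → ℤ) → AddSubgroup S) [GradedRing 𝒜] (s : S) : Prop :=
  ∀ v : Fin k → ℤ, (DirectSum.decompose 𝒜 s v : S) ≠ 0 → ∀ i : Fin k, 0 ≤ v i

namespace PosAux

open DirectSum

variable {k : ℕ} {S : Type*} [Ring S]
variable (𝒜 : (Fin k → ℤ) → AddSubgroup S) [GradedRing 𝒜]

lemma homog_memPos {d : Fin k → ℤ} (hd : ∀ i, 0 ≤ d i) {r : S} (hr : r ∈ 𝒜 d) :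
    MemPositiveSubring 𝒜 r := by
  intro v hv i
  by_cases h : d = v
  · exact h ▸ hd i
  · exact absurd (DirectSum.decompose_of_mem_ne 𝒜 hr h) hv

variable (hstrong : ∀ v w : Fin k → ℤ, ∀ z ∈ 𝒜 (v + w),
      z ∈ AddSubmonoid.closure {p : S | ∃ x ∈ 𝒜 v, ∃ y ∈ 𝒜 w, p = x * y})

include hstrong in
lemma exists_left {x : S} (hx : x ≠ 0) (E : Fin k → ℤ) :
    ∃ y ∈ 𝒜 E, y * x ≠ 0 := by
  by_contra hcon
  push_neg at hcon
  apply hx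
  have h1 : (1 : S) ∈ 𝒜 ((-E) + E) := by
    rw [neg_add_cancel]
    exact SetLike.one_mem_graded 𝒜
  have h2 := hstrong (-E) E 1 h1
  have key : (1 : S) * x = 0 := by
    refine AddSubmonoid.closure_induction ?_ ?_ ?_ h2
    · rintro p ⟨a, ha, b, hb, rfl⟩
      rw [mul_assoc, hcon b hb, mul_zero]
    · rw [zero_mul]
    · intro a b _ _ ha hb
      rw [add_mul, ha, hb, add_zero]
  rwa [one_mul] at key

include hstrong in
lemma exists_right {x : S} (hx : x ≠ 0) (E : Fin k → ℤ) :
    ∃ c ∈ 𝒜 E, x * c ≠ 0 := by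
  by_contra hcon
  push_neg at hcon
  apply hx
  have h1 : (1 : S) ∈ 𝒜 (E + (-E)) := by
    rw [add_neg_cancel]
    exact SetLike.one_mem_graded 𝒜
  have h2 := hstrong E (-E) 1 h1
  have key : x * (1 : S) = 0 := by
    refine AddSubmonoid.closure_induction ?_ ?_ ?_ h2
    · rintro p ⟨a, ha, b, hb, rfl⟩
      rw [← mul_assoc, hcon a ha, zero_mul]
    · rw [mul_zero]
    · intro a b _ _ ha hb
      rw [mul_add, ha, hb, add_zero]
  rwa [mul_one] at key

variable [inst : ∀ (i : Fin k → ℤ) (x : 𝒜 i), Decidable (x ≠ 0)]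

lemma supp_nonempty {x : S} (hx : x ≠ 0) : (decompose 𝒜 x).support.Nonempty := by
  rw [Finset.nonempty_iff_ne_empty]
  intro h
  apply hx
  have h2 := DirectSum.sum_support_decompose 𝒜 x
  rw [h, Finset.sum_empty] at h2
  exact h2.symm

lemma coe_ne_zero_of_mem_supp {x : S} {v : Fin k → ℤ}
    (hv : v ∈ (decompose 𝒜 x).support) : (decompose 𝒜 x v : S) ≠ 0 := by
  intro h
  exact DFinsupp.mem_support_iff.mp hv (ZeroMemClass.coe_eq_zero.mp h)

lemma mem_supp_of_coe_ne_zero {x : S} {v : Fin k → ℤ}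
    (hv : (decompose 𝒜 x v : S) ≠ 0) : v ∈ (decompose 𝒜 x).support := by
  rw [DFinsupp.mem_support_iff]
  intro h
  exact hv (by rw [h, ZeroMemClass.coe_zero])

lemma homog_of_card_le_one {x : S} (h : (decompose 𝒜 x).support.card ≤ 1) :
    ∃ u, x ∈ 𝒜 u := by
  obtain ⟨u, hu⟩ := Finset.card_le_one_iff_subset_singleton.mp h
  refine ⟨u, ?_⟩
  have h2 := DirectSum.sum_support_decompose 𝒜 x
  rw [← h2]
  refine AddSubgroup.sum_mem _ ?_
  intro w hw
  have : w = u := Finset.mem_singleton.mp (hu hw)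
  subst this
  exact SetLike.coe_mem _

lemma proj_triple (f r g : S) {d : Fin k → ℤ} (hr : r ∈ 𝒜 d) (p : Fin k → ℤ) :
    (DirectSum.decompose 𝒜 (f * r * g) p : S)
      = ∑ u ∈ (DirectSum.decompose 𝒜 f).support, ∑ w ∈ (DirectSum.decompose 𝒜 g).support,
          if u + d + w = p then
            (DirectSum.decompose 𝒜 f u : S) * r * (DirectSum.decompose 𝒜 g w : S) else 0 := by
  have hexp : f * r * g
      = ∑ u ∈ (decompose 𝒜 f).support, ∑ w ∈ (decompose 𝒜 g).support,
          (decompose 𝒜 f u : S) * r * (decompose 𝒜 g w : S) := by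
    conv_lhs => rw [← DirectSum.sum_support_decompose 𝒜 f,
      ← DirectSum.sum_support_decompose 𝒜 g]
    rw [Finset.sum_mul, Finset.sum_mul]
    exact Finset.sum_congr rfl fun u _ => by rw [Finset.mul_sum]
  have hproj : (DirectSum.decompose 𝒜 (f * r * g) p : S)
      = GradedRing.proj 𝒜 p (f * r * g) := (GradedRing.proj_apply 𝒜 p _).symm
  rw [hproj, hexp, map_sum]
  refine Finset.sum_congr rfl fun u _ => ?_
  rw [map_sum]
  refine Finset.sum_congr rfl fun w _ => ?_
  have hmem : (decompose 𝒜 f u : S) * r * (decompose 𝒜 g w : S) ∈ 𝒜 (u + d + w) :=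
    SetLike.mul_mem_graded (SetLike.mul_mem_graded (SetLike.coe_mem _) hr) (SetLike.coe_mem _)
  by_cases hc : u + d + w = p
  · rw [if_pos hc, GradedRing.proj_apply, DirectSum.decompose_of_mem_same 𝒜 (hc ▸ hmem)]
  · rw [if_neg hc, GradedRing.proj_apply, DirectSum.decompose_of_mem_ne 𝒜 hmem hc]

end PosAux


namespace PosAux2

open DirectSum

variable {k : ℕ} {S : Type*} [Ring S]
variable (𝒜 : (Fin k → ℤ) → AddSubgroup S) [GradedRing 𝒜]

lemma lex_unique {u u' w w' : Fin k → ℤ} (h1 : toLex u ≤ toLex u')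
    (h2 : toLex w ≤ toLex w') (hsum : u + w = u' + w') : u = u' ∧ w = w' := by
  have hadd : toLex u + toLex w = toLex u' + toLex w' := by
    rw [← toLex_add, ← toLex_add, hsum]
  have hw : toLex w = toLex w' := by
    refine le_antisymm h2 ?_
    have h3 : toLex u' + toLex w' ≤ toLex u' + toLex w := by
      calc toLex u' + toLex w' = toLex u + toLex w := hadd.symm
        _ ≤ toLex u' + toLex w := add_le_add_left h1 _
    exact le_of_add_le_add_left h3
  have hu : toLex u = toLex u' := by
    rw [hw] at hadd
    exact add_right_cancel hadd
  exact ⟨toLex.injective hu, toLex.injective hw⟩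

variable [inst : ∀ (i : Fin k → ℤ) (x : 𝒜 i), Decidable (x ≠ 0)]

lemma homogSep {f r g : S} {u d : Fin k → ℤ} (hf : f ∈ 𝒜 u) (hr : r ∈ 𝒜 d)
    (h0 : f * r * g = 0) (w : Fin k → ℤ) :
    f * r * (decompose 𝒜 g w : S) = 0 := by
  by_cases hw : w ∈ (decompose 𝒜 g).support
  · have hexp : f * r * g = ∑ w' ∈ (decompose 𝒜 g).support, f * r * (decompose 𝒜 g w' : S) := by
      conv_lhs => rw [← DirectSum.sum_support_decompose 𝒜 g]
      rw [Finset.mul_sum]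
    have hz : (0 : S) = ∑ w' ∈ (decompose 𝒜 g).support,
        (GradedRing.proj 𝒜 (u + d + w) (f * r * (decompose 𝒜 g w' : S))) := by
      rw [← map_sum, ← hexp, h0, map_zero]
    have hterm : ∀ w' ∈ (decompose 𝒜 g).support,
        GradedRing.proj 𝒜 (u + d + w) (f * r * (decompose 𝒜 g w' : S))
          = if w' = w then f * r * (decompose 𝒜 g w' : S) else 0 := by
      intro w' _
      have hmem : f * r * (decompose 𝒜 g w' : S) ∈ 𝒜 (u + d + w') :=
        SetLike.mul_mem_graded (SetLike.mul_mem_graded hf hr) (SetLike.coe_mem _)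
      by_cases hc : w' = w
      · subst hc
        rw [if_pos rfl, GradedRing.proj_apply, DirectSum.decompose_of_mem_same 𝒜 hmem]
      · rw [if_neg hc, GradedRing.proj_apply, DirectSum.decompose_of_mem_ne 𝒜 hmem]
        intro hcc
        apply hc
        funext i
        have := congrFun hcc i
        simp only [Pi.add_apply] at this
        omega
    rw [Finset.sum_congr rfl hterm, Finset.sum_ite_eq' _ w, if_pos hw] at hz
    exact hz.symm
  · have : decompose 𝒜 g w = 0 := DFinsupp.notMem_support_iff.mp hw
    rw [this, ZeroMemClass.coe_zero, mul_zero]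

lemma topTop {f g r : S} {d : Fin k → ℤ} (hr : r ∈ 𝒜 d) (h0 : f * r * g = 0)
    {U M : Fin k → ℤ}
    (hU : U ∈ (decompose 𝒜 f).support)
    (hUmax : ∀ u ∈ (decompose 𝒜 f).support, toLex u ≤ toLex U)
    (hM : M ∈ (decompose 𝒜 g).support)
    (hMmax : ∀ w ∈ (decompose 𝒜 g).support, toLex w ≤ toLex M) :
    (decompose 𝒜 f U : S) * r * (decompose 𝒜 g M : S) = 0 := by
  have huniq : ∀ u ∈ (decompose 𝒜 f).support, ∀ w ∈ (decompose 𝒜 g).support,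
      u + d + w = U + d + M → u = U ∧ w = M := by
    intro u hu w hw hsum
    have hsum2 : u + w = U + M := by
      funext i
      have := congrFun hsum i
      simp only [Pi.add_apply] at this ⊢
      omega
    exact lex_unique (hUmax u hu) (hMmax w hw) hsum2
  have hproj := PosAux.proj_triple 𝒜 f r g hr (U + d + M)
  rw [h0, DirectSum.decompose_zero] at hproj
  simp only [DirectSum.zero_apply, ZeroMemClass.coe_zero] at hproj
  rw [Finset.sum_eq_single_of_mem U hU] at hproj
  · rw [Finset.sum_eq_single_of_mem M hM] at hproj
    · rw [if_pos rfl] at hproj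
      exact hproj.symm
    · intro w hw hne
      exact if_neg fun hc => hne (huniq U hU w hw hc).2
  · intro u hu hne
    refine Finset.sum_eq_zero fun w hw => ?_
    exact if_neg fun hc => hne (huniq u hu w hw hc).1

lemma decompose_homog_mul {a g : S} {e : Fin k → ℤ} (ha : a ∈ 𝒜 e) (p : Fin k → ℤ) :
    (decompose 𝒜 (a * g) p : S) = a * (decompose 𝒜 g (p - e) : S) := by
  have h := DirectSum.coe_decompose_mul_add_of_left_mem (𝒜 := 𝒜) (j := p - e) (b := g) ha
  have h2 : e + (p - e) = p := by abel
  rwa [h2] at h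

end PosAux2

namespace PosAux3

open DirectSum

variable {k : ℕ} {S : Type*} [Ring S]
variable (𝒜 : (Fin k → ℤ) → AddSubgroup S) [GradedRing 𝒜]
variable [inst : ∀ (i : Fin k → ℤ) (x : 𝒜 i), Decidable (x ≠ 0)]

lemma main
    (hstrong : ∀ v w : Fin k → ℤ, ∀ z ∈ 𝒜 (v + w),
      z ∈ AddSubmonoid.closure {p : S | ∃ x ∈ 𝒜 v, ∃ y ∈ 𝒜 w, p = x * y}) :
    ∀ (N : ℕ) (L : List S) (g : S) (D : Fin k → ℤ),
      ((L.map fun x => (DirectSum.decompose 𝒜 x).support.card - 1).sum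
        + (DirectSum.decompose 𝒜 g).support.card ≤ N) →
      g ≠ 0 →
      (∀ f ∈ L, ∀ d : Fin k → ℤ, (∀ i, D i ≤ d i) → ∀ r ∈ 𝒜 d, f * r * g = 0) →
      ∃ h ∈ 𝒜 (0 : Fin k → ℤ), h ≠ 0 ∧
        ∀ f ∈ L, ∀ r : S, MemPositiveSubring 𝒜 r → f * r * h = 0 := by
  intro N
  induction N with
  | zero =>
    intro L g D hN hg _
    exfalso
    have := Finset.card_pos.mpr (PosAux.supp_nonempty 𝒜 hg)
    omega
  | succ N ih =>
    intro L g D hN hg hann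
    letI : LinearOrder (Lex (Fin k → ℤ)) :=
      @Pi.Lex.linearOrder (Fin k) (fun _ => ℤ) inferInstance
        Finite.to_wellFoundedLT inferInstance
    by_cases hbase : ∀ f ∈ L, (decompose 𝒜 f).support.card ≤ 1
    · -- base case : all members of L are homogeneous
      obtain ⟨v, hv⟩ := PosAux.supp_nonempty 𝒜 hg
      have hgvne : (decompose 𝒜 g v : S) ≠ 0 := PosAux.coe_ne_zero_of_mem_supp 𝒜 hv
      have claim1 : ∀ f ∈ L, ∀ d : Fin k → ℤ, (∀ i, D i ≤ d i) → ∀ r ∈ 𝒜 d,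
          f * r * (decompose 𝒜 g v : S) = 0 := by
        intro f hfL d hd r hr
        obtain ⟨u, hu⟩ := PosAux.homog_of_card_le_one 𝒜 (hbase f hfL)
        exact PosAux2.homogSep 𝒜 hu hr (hann f hfL d hd r hr) v
      set E : Fin k → ℤ := fun i => max (D i) 0 with hE
      obtain ⟨y, hy, hyne⟩ := PosAux.exists_left 𝒜 hstrong hgvne E
      have h1mem : y * (decompose 𝒜 g v : S) ∈ 𝒜 (E + v) :=
        SetLike.mul_mem_graded hy (SetLike.coe_mem _)
      obtain ⟨c, hc, hcne⟩ := PosAux.exists_right 𝒜 hstrong hyne (-(E + v))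
      refine ⟨y * (decompose 𝒜 g v : S) * c, ?_, hcne, ?_⟩
      · have := SetLike.mul_mem_graded h1mem hc
        rwa [add_neg_cancel] at this
      · intro f hfL r hrpos
        have hmain : f * (r * y) * (decompose 𝒜 g v : S) = 0 := by
          conv_lhs => rw [← DirectSum.sum_support_decompose 𝒜 r]
          rw [Finset.sum_mul, Finset.mul_sum, Finset.sum_mul]
          refine Finset.sum_eq_zero fun d hd => ?_
          have hd0 : ∀ i, 0 ≤ d i := hrpos d (PosAux.coe_ne_zero_of_mem_supp 𝒜 hd)
          have hdy : (decompose 𝒜 r d : S) * y ∈ 𝒜 (d + E) :=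
            SetLike.mul_mem_graded (SetLike.coe_mem _) hy
          refine claim1 f hfL (d + E) (fun i => ?_) _ hdy
          have := hd0 i
          simp only [Pi.add_apply, hE]
          omega
        calc f * r * (y * (decompose 𝒜 g v : S) * c)
            = f * (r * y) * (decompose 𝒜 g v : S) * c := by
              rw [← mul_assoc, ← mul_assoc, mul_assoc f r y]
          _ = 0 := by rw [hmain, zero_mul]
    · -- step case
      push_neg at hbase
      obtain ⟨f0, hf0L, hf0c⟩ := hbase
      have hgsupp : (decompose 𝒜 g).support.Nonempty := PosAux.supp_nonempty 𝒜 hg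
      have hfsupp : (decompose 𝒜 f0).support.Nonempty := Finset.card_pos.mp (by omega)
      obtain ⟨Ml, hMl, hMlmax⟩ := Finset.exists_max_image (decompose 𝒜 g).support toLex hgsupp
      obtain ⟨U, hU, hUmax⟩ := Finset.exists_max_image (decompose 𝒜 f0).support toLex hfsupp
      by_cases hA : ∃ e : Fin k → ℤ, ∃ a : S, a ∈ 𝒜 e ∧
          a * (decompose 𝒜 g Ml : S) = 0 ∧ a * g ≠ 0
      · -- Case A : we can strictly shrink the support of g
        obtain ⟨e, a, hae, haM, hag⟩ := hA
        have hsub : (decompose 𝒜 (a * g)).support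
            ⊆ ((decompose 𝒜 g).support.erase Ml).image (fun w => e + w) := by
          intro p hp
          have hne := PosAux.coe_ne_zero_of_mem_supp 𝒜 hp
          rw [PosAux2.decompose_homog_mul 𝒜 hae p] at hne
          have h1 : (decompose 𝒜 g (p - e) : S) ≠ 0 := fun h => hne (by rw [h, mul_zero])
          have h2 : p - e ≠ Ml := fun h => hne (by rw [h, haM])
          exact Finset.mem_image.mpr ⟨p - e,
            Finset.mem_erase.mpr ⟨h2, PosAux.mem_supp_of_coe_ne_zero 𝒜 h1⟩, by abel⟩
        have hcard : (decompose 𝒜 (a * g)).support.card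
            ≤ (decompose 𝒜 g).support.card - 1 := by
          calc (decompose 𝒜 (a * g)).support.card
              ≤ (((decompose 𝒜 g).support.erase Ml).image (fun w => e + w)).card :=
                Finset.card_le_card hsub
            _ ≤ ((decompose 𝒜 g).support.erase Ml).card := Finset.card_image_le
            _ = (decompose 𝒜 g).support.card - 1 := Finset.card_erase_of_mem hMl
        have hgcard : 1 ≤ (decompose 𝒜 g).support.card := Finset.card_pos.mpr hgsupp
        refine ih L (a * g) (D - e) (by omega) hag ?_
        intro f hfL d hd r hr
        have hra : r * a ∈ 𝒜 (d + e) := SetLike.mul_mem_graded hr hae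
        have hz := hann f hfL (d + e) (fun i => ?_) _ hra
        · calc f * r * (a * g) = f * (r * a) * g := by rw [← mul_assoc, mul_assoc f r a]
            _ = 0 := hz
        · have := hd i
          simp only [Pi.sub_apply] at this
          simp only [Pi.add_apply]
          omega
      · -- Case B : every homogeneous annihilator of g_M annihilates g
        push_neg at hA
        have htop : ∀ d : Fin k → ℤ, (∀ i, D i ≤ d i) → ∀ r ∈ 𝒜 d,
            (decompose 𝒜 f0 U : S) * r * g = 0 := by
          intro d hd r hr
          have h1 : (decompose 𝒜 f0 U : S) * r * (decompose 𝒜 g Ml : S) = 0 :=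
            PosAux2.topTop 𝒜 hr (hann f0 hf0L d hd r hr) hU hUmax hMl hMlmax
          have h2 : (decompose 𝒜 f0 U : S) * r ∈ 𝒜 (U + d) :=
            SetLike.mul_mem_graded (SetLike.coe_mem _) hr
          exact hA (U + d) _ h2 h1
        classical
        set fu : S := (decompose 𝒜 f0 U : S) with hfu
        have hfumem : fu ∈ 𝒜 U := SetLike.coe_mem _
        have hsub1 : (decompose 𝒜 (f0 - fu)).support ⊆ (decompose 𝒜 f0).support.erase U := by
          intro p hp
          rw [GradedRing.mem_support_iff, map_sub] at hp
          have hpU : p ≠ U := by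
            intro h; subst h
            apply hp
            have e1 : GradedRing.proj 𝒜 p fu = fu :=
              DirectSum.decompose_of_mem_same 𝒜 hfumem
            have e2 : GradedRing.proj 𝒜 p f0 = fu := rfl
            rw [e1, e2, sub_self]
          have hp0 : GradedRing.proj 𝒜 p fu = 0 :=
            DirectSum.decompose_of_mem_ne 𝒜 hfumem (Ne.symm hpU)
          rw [hp0, sub_zero] at hp
          exact Finset.mem_erase.mpr ⟨hpU, (GradedRing.mem_support_iff 𝒜 f0 p).mpr hp⟩
        have hsub2 : (decompose 𝒜 fu).support ⊆ {U} := by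
          intro p hp
          rw [GradedRing.mem_support_iff] at hp
          by_contra hpU
          exact hp (DirectSum.decompose_of_mem_ne 𝒜 hfumem
            (Ne.symm (fun h => hpU (h ▸ Finset.mem_singleton_self U))))
        have c1 : (decompose 𝒜 (f0 - fu)).support.card
            ≤ (decompose 𝒜 f0).support.card - 1 := by
          calc (decompose 𝒜 (f0 - fu)).support.card
              ≤ ((decompose 𝒜 f0).support.erase U).card := Finset.card_le_card hsub1
            _ = (decompose 𝒜 f0).support.card - 1 := Finset.card_erase_of_mem hU
        have c2 : (decompose 𝒜 fu).support.card ≤ 1 := by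
          calc (decompose 𝒜 fu).support.card ≤ ({U} : Finset _).card :=
              Finset.card_le_card hsub2
            _ = 1 := Finset.card_singleton U
        have hperm : L.Perm (f0 :: L.erase f0) := List.perm_cons_erase hf0L
        have hsum : (L.map fun x => (decompose 𝒜 x).support.card - 1).sum
            = ((decompose 𝒜 f0).support.card - 1)
              + ((L.erase f0).map fun x => (decompose 𝒜 x).support.card - 1).sum := by
          rw [List.Perm.sum_eq (List.Perm.map _ hperm), List.map_cons, List.sum_cons]
        have hann' : ∀ f ∈ (f0 - fu) :: fu :: (L.erase f0),
            ∀ d : Fin k → ℤ, (∀ i, D i ≤ d i) → ∀ r ∈ 𝒜 d, f * r * g = 0 := by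
          intro f hf d hd r hr
          rcases List.mem_cons.mp hf with rfl | hf2
          · rw [sub_mul, sub_mul, hann f0 hf0L d hd r hr, htop d hd r hr, sub_zero]
          · rcases List.mem_cons.mp hf2 with rfl | hf3
            · exact htop d hd r hr
            · exact hann f (List.mem_of_mem_erase hf3) d hd r hr
        have hmeas : ((((f0 - fu) :: fu :: (L.erase f0)).map
              fun x => (decompose 𝒜 x).support.card - 1).sum
            + (decompose 𝒜 g).support.card) ≤ N := by
          rw [List.map_cons, List.map_cons, List.sum_cons, List.sum_cons]
          rw [hsum] at hN
          omega
        obtain ⟨h, hmem, hne, hcon⟩ := ih ((f0 - fu) :: fu :: (L.erase f0)) g D hmeas hg hann'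
        refine ⟨h, hmem, hne, ?_⟩
        intro f hfL r hrpos
        by_cases hff : f = f0
        · subst hff
          have e1 := hcon (f - fu) List.mem_cons_self r hrpos
          have e2 := hcon fu (List.mem_cons_of_mem _ List.mem_cons_self) r hrpos
          calc f * r * h = ((f - fu) + fu) * r * h := by rw [sub_add_cancel]
            _ = (f - fu) * r * h + fu * r * h := by rw [add_mul, add_mul]
            _ = 0 := by rw [e1, e2, add_zero]
        · exact hcon f (List.mem_cons_of_mem _ (List.mem_cons_of_mem _
            ((List.mem_erase_of_ne hff).mpr hfL))) r hrpos

end PosAux3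

/-- Let `S` be a strongly `ℤ^k`-graded unital ring with positive subring `R = S₊`.
If `f 1, …, f ℓ ∈ S` admit a non-zero `g ∈ S` with `f j * r * g = 0` for all `j` and all
`r ∈ R`, then there is a non-zero `h ∈ 𝒜 0` with `f j * r * h = 0` for all `j` and all
`r ∈ R`. -/
theorem exists_degree_zero_annihilator_of_strongly_graded
    {k : ℕ} {S : Type*} [Ring S]
    (𝒜 : (Fin k → ℤ) → AddSubgroup S) [GradedRing 𝒜]
    (hstrong : ∀ v w : Fin k → ℤ, ∀ z ∈ 𝒜 (v + w),
      z ∈ AddSubmonoid.closure {p : S | ∃ x ∈ 𝒜 v, ∃ y ∈ 𝒜 w, p = x * y})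
    {ℓ : ℕ} (f : Fin ℓ → S) (g : S) (hg : g ≠ 0)
    (hfg : ∀ j : Fin ℓ, ∀ r : S, MemPositiveSubring 𝒜 r → f j * r * g = 0) :
    ∃ h ∈ 𝒜 (0 : Fin k → ℤ), h ≠ 0 ∧
      ∀ j : Fin ℓ, ∀ r : S, MemPositiveSubring 𝒜 r → f j * r * h = 0 := by
  haveI instDec : ∀ (i : Fin k → ℤ) (x : 𝒜 i), Decidable (x ≠ 0) := fun _ _ => Classical.dec _
  have hann : ∀ f' ∈ List.ofFn f, ∀ d : Fin k → ℤ, (∀ i, (0 : Fin k → ℤ) i ≤ d i) →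
      ∀ r ∈ 𝒜 d, f' * r * g = 0 := by
    intro f' hf' d hd r hr
    obtain ⟨j, rfl⟩ := List.mem_ofFn.mp hf'
    exact hfg j r (PosAux.homog_memPos 𝒜 (fun i => hd i) hr)
  obtain ⟨h, hmem, hne, hcon⟩ := PosAux3.main 𝒜 hstrong
    ((((List.ofFn f).map fun x => (DirectSum.decompose 𝒜 x).support.card - 1).sum
      + (DirectSum.decompose 𝒜 g).support.card))
    (List.ofFn f) g 0 le_rfl hg hann
  exact ⟨h, hmem, hne, fun j r hr =>
    hcon (f j) (List.mem_ofFn.mpr ⟨j, rfl⟩) r hr⟩
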